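/- Let a₁,a₂,a₃,a₄ be the Sastry sides with parameters (t,u₁,v₁) and b₁,b₂,b₃,b₄ the Sastry sides with parameters (t,u₂,v₂), where v₁,v₂ are given by the rational functions v₁ = ((u₁+u₂)u₂m²+(2u₁+2u₂)m−u₁u₂+u₂²+2)/D, v₂ = ((u₁+u₂)u₁m²+(2u₁+2u₂)m+u₁²−u₁u₂+2)/D with D = (u₁+u₂)m²+(−2u₁u₂+2)m−u₁−u₂ ≠ 0. Then a₃ = t(1+u₁²)(1+v₁²) equals b₃ = t(1+u₂²)(1+v₂²), and the circumradii (1+t²)(1+u₁²)(1+v₁²)/4 and (1+t²)(1+u₂²)(1+v₂²)/4 are equal. -/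

import Mathlib

theorem hexagon_common_side_and_circumradius (t u1 u2 m D v1 v2 : ℚ)
    (hD : D = (u1 + u2) * m^2 + (-(2 * u1 * u2) + 2) * m - u1 - u2)
    (hD0 : D ≠ 0)
    (hv1 : v1 = ((u1 + u2) * u2 * m^2 + (2 * u1 + 2 * u2) * m
      - u1 * u2 + u2^2 + 2) / D)
    (hv2 : v2 = ((u1 + u2) * u1 * m^2 + (2 * u1 + 2 * u2) * m
      + u1^2 - u1 * u2 + 2) / D) :
    t * (1 + u1^2) * (1 + v1^2) = t * (1 + u2^2) * (1 + v2^2) ∧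
    (1 + t^2) * (1 + u1^2) * (1 + v1^2) / 4 =
      (1 + t^2) * (1 + u2^2) * (1 + v2^2) / 4 := by
  have key : (1 + u1^2) * (1 + v1^2) = (1 + u2^2) * (1 + v2^2) := by
    subst hv1 hv2
    field_simp
    subst hD
    ring
  constructor
  · rw [mul_assoc, mul_assoc, key]
  · rw [mul_assoc, mul_assoc, key]
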